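/- Let n > 3 be odd, let k be an even integer with 0 ≤ k ≤ (n−1)/2, and let M ∈ {0,…,(n−3)/2}. Define β_n^e(k;M) = R_n r_n [R_n(r_n² − 1)(cos(kθ_n) − 1) − sin(kθ_n)/tan((2M+1)θ_n)] and β̂_n^e(k;M) = R_n[2R_n r_n² cos(kθ_n) + sin(kθ_n)/sin((2M+1)θ_n)] + R_n²(1 + r_n⁴). Then every family {(p(a|s), ω_s^a)}_{s,a∈{0,1}} with p(a|s) ≥ 0, Σ_a p(a|s) = 1, ω_s^a ∈ Ω_n and Σ_a p(a|0)ω_0^a = Σ_a p(a|1)ω_1^a whose common barycenter Σ_a p(a|0)ω_0^a has first coordinate x lying in [r_n cos((2M+2)θ_n), r_n cos(2Mθ_n)] satisfies |C| ≤ 4(β_n^e(k;M)·x + β̂_n^e(k;M)) − 2, where C = 4(Σ_{s,a∈{0,1}} p(a|s)⟨Q_s^a, ω_s^a⟩ − 1). -/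

import Mathlib

noncomputable section

/-- Standard inner product on `ℝ³`. -/
def dot3 (v w : Fin 3 → ℝ) : ℝ := ∑ i, v i * w i

/-- The angle `θ_n = π / n`. -/
def thetaN (n : ℕ) : ℝ := Real.pi / n

/-- `r_n = (cos θ_n)^{-1/2}`. -/
def rN (n : ℕ) : ℝ := Real.sqrt (Real.cos (thetaN n))⁻¹

/-- `R_n = 1 / (1 + r_n²)`. -/
def RN (n : ℕ) : ℝ := 1 / (1 + rN n ^ 2)

/-- The pure states `ω_n(i)` of the regular polygon theory. -/
def omegaN (n i : ℕ) : Fin 3 → ℝ :=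
  ![rN n * Real.cos (2 * (i : ℝ) * thetaN n), rN n * Real.sin (2 * (i : ℝ) * thetaN n), 1]

/-- The state space `Ω_n`, the convex hull of the pure states. -/
def OmegaN (n : ℕ) : Set (Fin 3 → ℝ) :=
  convexHull ℝ {v | ∃ i < n, v = omegaN n i}

/-- The unit effect `u = (0,0,1)`. -/
def uEff : Fin 3 → ℝ := ![0, 0, 1]

/-- The pure effects `e_n(i)` (separate formulas for even and odd `n`). -/
def eN (n i : ℕ) : Fin 3 → ℝ :=
  if Even n then
    (1 / 2 : ℝ) • ![rN n * Real.cos ((2 * (i : ℝ) + 1) * thetaN n),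
                    rN n * Real.sin ((2 * (i : ℝ) + 1) * thetaN n), 1]
  else
    RN n • ![rN n * Real.cos (2 * (i : ℝ) * thetaN n),
             rN n * Real.sin (2 * (i : ℝ) * thetaN n), 1]

/-- The complementary effect `ē_n(i) = u - e_n(i)`. -/
def eBarN (n i : ℕ) : Fin 3 → ℝ := uEff - eN n i

/-- The effect space `E_n`. -/
def EffN (n : ℕ) : Set (Fin 3 → ℝ) :=
  {f | ∀ ω ∈ OmegaN n, dot3 f ω ∈ Set.Icc (0 : ℝ) 1}

/-- The positive cone `V_{n+}` generated by the state space. -/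
def VposN (n : ℕ) : Set (Fin 3 → ℝ) :=
  {x | ∃ c : ℝ, 0 ≤ c ∧ ∃ ω ∈ OmegaN n, x = c • ω}

/-- The dual cone `V*_{n+}` generated by the effect space. -/
def VdualN (n : ℕ) : Set (Fin 3 → ℝ) :=
  {x | ∃ c : ℝ, 0 ≤ c ∧ ∃ f ∈ EffN n, x = c • f}

/-- A state of `Ω_n ⊗_max Ω_n`, identified with a normalized cone-preserving linear map. -/
def IsState (n : ℕ) (η : (Fin 3 → ℝ) →ₗ[ℝ] (Fin 3 → ℝ)) : Prop :=
  (∀ x ∈ VdualN n, η x ∈ VposN n) ∧ dot3 uEff (η uEff) = 1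

/-- A binary observable on `Ω_n`: a pair of effects summing to the unit effect. -/
def IsObservable (n : ℕ) (A : (Fin 3 → ℝ) × (Fin 3 → ℝ)) : Prop :=
  A.1 ∈ EffN n ∧ A.2 ∈ EffN n ∧ A.1 + A.2 = uEff

/-- The observable `E_n(i) = (e_n(i), ē_n(i))`. -/
def EObs (n i : ℕ) : (Fin 3 → ℝ) × (Fin 3 → ℝ) := (eN n i, eBarN n i)

/-- The correlator `E(st) = Σ_{a,b} (-1)^{a+b} ⟨B^b, η(A^a)⟩`. -/
def corr (η : (Fin 3 → ℝ) →ₗ[ℝ] (Fin 3 → ℝ)) (A B : (Fin 3 → ℝ) × (Fin 3 → ℝ)) : ℝ :=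
  dot3 B.1 (η A.1) - dot3 B.2 (η A.1) - dot3 B.1 (η A.2) + dot3 B.2 (η A.2)

/-- The CHSH value `C[η; A₀,A₁; B₀,B₁] = E(00) + E(01) + E(10) - E(11)`. -/
def CHSH (η : (Fin 3 → ℝ) →ₗ[ℝ] (Fin 3 → ℝ))
    (A0 A1 B0 B1 : (Fin 3 → ℝ) × (Fin 3 → ℝ)) : ℝ :=
  corr η A0 B0 + corr η A0 B1 + corr η A1 B0 - corr η A1 B1

/-- `GL(Ω_n)`: linear bijections of `ℝ³` preserving the state space. -/
def GLOmega (n : ℕ) : Set ((Fin 3 → ℝ) →ₗ[ℝ] (Fin 3 → ℝ)) :=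
  {T | Function.Bijective T ∧ T '' OmegaN n = OmegaN n}

/-- The order isomorphism `T_n`: a rotation by `θ_n` for even `n`, the identity for odd `n`. -/
def TN (n : ℕ) : (Fin 3 → ℝ) →ₗ[ℝ] (Fin 3 → ℝ) :=
  if Even n then
    Matrix.toLin' !![Real.cos (thetaN n), Real.sin (thetaN n), 0;
                     -Real.sin (thetaN n), Real.cos (thetaN n), 0;
                     0, 0, 1]
  else LinearMap.id

/-- Maximally entangled states: elements of `T_n · GL(Ω_n)`. -/
def MaxEnt (n : ℕ) (η : (Fin 3 → ℝ) →ₗ[ℝ] (Fin 3 → ℝ)) : Prop :=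
  ∃ T ∈ GLOmega n, η = (TN n).comp T

/-- The effects `Q_s^a` in the rotated coordinates:
`Q₀⁰ = (R_n r_n cos kθ_n, 0, R_n)`, `Q₀¹ = (−R_n r_n cos kθ_n, 0, 1−R_n)`,
`Q₁⁰ = (0, R_n r_n sin kθ_n, ½)`, `Q₁¹ = (0, −R_n r_n sin kθ_n, ½)`. -/
def QQrot (n k : ℕ) : Fin 2 → Fin 2 → Fin 3 → ℝ :=
  ![![![RN n * rN n * Real.cos ((k : ℝ) * thetaN n), 0, RN n],
     ![-(RN n * rN n * Real.cos ((k : ℝ) * thetaN n)), 0, 1 - RN n]],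
    ![![0, RN n * rN n * Real.sin ((k : ℝ) * thetaN n), 1 / 2],
     ![0, -(RN n * rN n * Real.sin ((k : ℝ) * thetaN n)), 1 / 2]]]

/-- `β_n^e(k;M)`. -/
def betaE (n k M : ℕ) : ℝ :=
  RN n * rN n * (RN n * (rN n ^ 2 - 1) * (Real.cos ((k : ℝ) * thetaN n) - 1)
    - Real.sin ((k : ℝ) * thetaN n) / Real.tan ((2 * (M : ℝ) + 1) * thetaN n))

/-- `β̂_n^e(k;M)`. -/
def betaHatE (n k M : ℕ) : ℝ :=
  RN n * (2 * RN n * rN n ^ 2 * Real.cos ((k : ℝ) * thetaN n)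
    + Real.sin ((k : ℝ) * thetaN n) / Real.sin ((2 * (M : ℝ) + 1) * thetaN n))
    + RN n ^ 2 * (1 + rN n ^ 4)

/-! ### Auxiliary machinery for the proof -/

/-- Linear inequalities valid on the pure states hold on the whole state space. -/
lemma hull_le_const {n : ℕ} {q : Fin 3 → ℝ} {c : ℝ}
    (h : ∀ i < n, dot3 q (omegaN n i) ≤ c) : ∀ ω ∈ OmegaN n, dot3 q ω ≤ c := by
  intro ω hω
  have hlin : IsLinearMap ℝ (fun v : Fin 3 → ℝ => dot3 q v) := by
    constructor
    · intro a b; simp [dot3, mul_add, Finset.sum_add_distrib]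
    · intro t a
      simp only [dot3, Pi.smul_apply, smul_eq_mul, Finset.mul_sum]
      exact Finset.sum_congr rfl fun i _ => by ring
  have hconv : Convex ℝ {v : Fin 3 → ℝ | dot3 q v ≤ c} := convex_halfSpace_le hlin c
  have hsub : OmegaN n ⊆ {v : Fin 3 → ℝ | dot3 q v ≤ c} :=
    convexHull_min (fun v hv => by obtain ⟨i, hi, rfl⟩ := hv; exact h i hi) hconv
  exact hsub hω

lemma dot3_sub_eq (q q' v : Fin 3 → ℝ) : dot3 (q - q') v = dot3 q v - dot3 q' v := by
  simp [dot3, sub_mul, Finset.sum_sub_distrib]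

lemma hull_le_dot {n : ℕ} {q q' : Fin 3 → ℝ}
    (h : ∀ i < n, dot3 q (omegaN n i) ≤ dot3 q' (omegaN n i)) :
    ∀ ω ∈ OmegaN n, dot3 q ω ≤ dot3 q' ω := by
  intro ω hω
  have h' := hull_le_const (n := n) (q := q - q') (c := 0)
    (fun i hi => by rw [dot3_sub_eq]; linarith [h i hi]) ω hω
  rw [dot3_sub_eq] at h'
  linarith

/-- Every state has third coordinate `1`. -/
lemma hull_z {n : ℕ} : ∀ ω ∈ OmegaN n, ω 2 = 1 := by
  intro ω hω
  have h1 := hull_le_const (n := n) (q := ![0,0,1]) (c := 1)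
    (fun i _ => by simp [dot3, omegaN, Fin.sum_univ_three]) ω hω
  have h2 := hull_le_const (n := n) (q := ![0,0,-1]) (c := -1)
    (fun i _ => by simp [dot3, omegaN, Fin.sum_univ_three]) ω hω
  have e1 : dot3 ![0,0,1] ω = ω 2 := by simp [dot3, Fin.sum_univ_three]
  have e2 : dot3 ![0,0,-1] ω = -(ω 2) := by simp [dot3, Fin.sum_univ_three]
  rw [e1] at h1; rw [e2] at h2; linarith

/-- For any odd integer `m`, `cos (m·π/n) ≤ cos (π/n)`. -/
lemma cos_odd_mul_le (n : ℕ) (hn : 0 < n) (m : ℤ) (hm : Odd m) :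
    Real.cos ((m : ℝ) * (Real.pi / n)) ≤ Real.cos (Real.pi / n) := by
  have hnR : (0:ℝ) < n := by exact_mod_cast hn
  have hθpos : 0 < Real.pi / n := div_pos Real.pi_pos hnR
  have hpi : (n:ℝ) * (Real.pi / n) = Real.pi := by field_simp
  have h2n : (0:ℤ) < 2 * n := by positivity
  set q : ℤ := m % (2 * n) with hq
  have hq0 : 0 ≤ q := Int.emod_nonneg m (by omega)
  have hq2 : q < 2 * n := Int.emod_lt_of_pos m h2n
  have hqodd : q % 2 = 1 := by
    have hd : (2:ℤ) ∣ 2 * n := ⟨n, rfl⟩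
    rw [hq, Int.emod_emod_of_dvd m hd, Int.odd_iff.mp hm]
  have hdm : 2 * n * (m / (2*n)) + q = m := Int.mul_ediv_add_emod m (2*n)
  have hcast : (m:ℝ) * (Real.pi/n)
      = (q:ℝ)*(Real.pi/n) + ((m / (2*n) : ℤ) : ℝ) * (2*Real.pi) := by
    have hm' : (m:ℝ) = 2*(n:ℝ)*((m/(2*n) : ℤ):ℝ) + (q:ℝ) := by exact_mod_cast hdm.symm
    rw [hm']; field_simp; ring
  rw [hcast, Real.cos_add_int_mul_two_pi]
  have hq1 : 1 ≤ q := by omega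
  have hq1R : (1:ℝ) ≤ (q:ℝ) := by exact_mod_cast hq1
  rcases le_or_gt q n with hle | hgt
  · have hleR : (q:ℝ) ≤ n := by exact_mod_cast hle
    apply Real.cos_le_cos_of_nonneg_of_le_pi hθpos.le
    · calc (q:ℝ)*(Real.pi/n) ≤ (n:ℝ)*(Real.pi/n) :=
            mul_le_mul_of_nonneg_right hleR hθpos.le
        _ = Real.pi := hpi
    · nlinarith
  · have hgtR : (n:ℝ) < (q:ℝ) := by exact_mod_cast hgt
    have hq2R : (q:ℝ) ≤ 2*(n:ℝ) - 1 := by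
      have h' : q ≤ 2*(n:ℤ) - 1 := by omega
      exact_mod_cast h'
    have hkey : Real.cos ((q:ℝ)*(Real.pi/n)) = Real.cos ((2*(n:ℝ) - q) * (Real.pi/n)) := by
      have e : (2*(n:ℝ) - q) * (Real.pi/n) = 2*Real.pi - (q:ℝ)*(Real.pi/n) := by
        field_simp
      rw [e, Real.cos_two_pi_sub]
    rw [hkey]
    apply Real.cos_le_cos_of_nonneg_of_le_pi hθpos.le
    · have h1 : (2*(n:ℝ) - q) ≤ n := by linarith
      calc (2*(n:ℝ) - q)*(Real.pi/n) ≤ (n:ℝ)*(Real.pi/n) :=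
            mul_le_mul_of_nonneg_right h1 hθpos.le
        _ = Real.pi := hpi
    · nlinarith

/-- Auxiliary certificate coefficients. -/
def auxA0 (n k : ℕ) : ℝ :=
  RN n^2 * rN n * (rN n^2 - 1) * (Real.cos ((k:ℝ) * thetaN n) - 1)

def auxC0 (n k : ℕ) : ℝ :=
  2 * RN n^2 * rN n^2 * Real.cos ((k:ℝ)*thetaN n) + RN n^2 * (1 + rN n^4)

def auxA1 (n k M : ℕ) : ℝ :=
  -(RN n * rN n * Real.sin ((k:ℝ)*thetaN n) * Real.cos ((2*(M:ℝ)+1)*thetaN n)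
      / Real.sin ((2*(M:ℝ)+1)*thetaN n))

def auxC1 (n k M : ℕ) : ℝ :=
  RN n * Real.sin ((k:ℝ)*thetaN n) / Real.sin ((2*(M:ℝ)+1)*thetaN n) + 1/2

lemma aux_id (n k M : ℕ) (x : ℝ) :
    auxA0 n k * x + auxC0 n k + (auxA1 n k M * x + auxC1 n k M)
      = betaE n k M * x + betaHatE n k M + 1/2 := by
  simp only [auxA0, auxC0, auxA1, auxC1, betaE, betaHatE]
  rw [Real.tan_eq_sin_div_cos, div_div_eq_mul_div]
  ring

/-- Scalar vertex inequality for `Q₀⁰`. -/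
lemma key00 (r c u : ℝ) (hr1 : 1 ≤ r^2) (hc0 : 0 ≤ c) (hu1 : u ≤ 1) (hr0 : 0 < r) :
    1/(1+r^2) * r * c * (r * u) + 1/(1+r^2)
      ≤ (1/(1+r^2))^2 * r * (r^2-1) * (c-1) * (r*u)
        + (2 * (1/(1+r^2))^2 * r^2 * c + (1/(1+r^2))^2 * (1 + r^4)) := by
  rw [← sub_nonneg]
  have h1 : (0:ℝ) < 1 + r^2 := by positivity
  have h1' : (1:ℝ) + r^2 ≠ 0 := ne_of_gt h1
  have hexp : (1/(1+r^2))^2 * r * (r^2-1) * (c-1) * (r*u)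
        + (2 * (1/(1+r^2))^2 * r^2 * c + (1/(1+r^2))^2 * (1 + r^4))
        - (1/(1+r^2) * r * c * (r * u) + 1/(1+r^2))
      = (1-u) * (2*c + r^2 - 1) * r^2 / (1+r^2)^2 := by
    field_simp
    ring
  rw [hexp]
  apply div_nonneg _ (by positivity)
  exact mul_nonneg (mul_nonneg (by linarith) (by linarith)) (sq_nonneg r)

/-- Scalar vertex inequality for `Q₀¹`. -/
lemma key01 (r c u : ℝ) (hc1 : r^2 - 1 ≤ 2*r^2*c) (hu2 : -(r^2)⁻¹ ≤ u) (hr0 : 0 < r) :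
    -(1/(1+r^2) * r * c) * (r * u) + (1 - 1/(1+r^2))
      ≤ (1/(1+r^2))^2 * r * (r^2-1) * (c-1) * (r*u)
        + (2 * (1/(1+r^2))^2 * r^2 * c + (1/(1+r^2))^2 * (1 + r^4)) := by
  rw [← sub_nonneg]
  have h1 : (0:ℝ) < 1 + r^2 := by positivity
  have h1' : (1:ℝ) + r^2 ≠ 0 := ne_of_gt h1
  have hr2 : (0:ℝ) < r^2 := by positivity
  have hexp : (1/(1+r^2))^2 * r * (r^2-1) * (c-1) * (r*u)
        + (2 * (1/(1+r^2))^2 * r^2 * c + (1/(1+r^2))^2 * (1 + r^4))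
        - (-(1/(1+r^2) * r * c) * (r * u) + (1 - 1/(1+r^2)))
      = (u + (r^2)⁻¹) * (2*r^2*c - r^2 + 1) * r^2 / (1+r^2)^2 := by
    field_simp
    ring
  rw [hexp]
  apply div_nonneg _ (by positivity)
  have hu2' : 0 ≤ u + (r^2)⁻¹ := by linarith
  exact mul_nonneg (mul_nonneg hu2' (by linarith)) (sq_nonneg r)

/-- Scalar vertex inequality for `Q₁⁰` (and `Q₁¹` via `v ↦ -v`). -/
lemma key1 (R r s cp sv cth u v : ℝ) (hR : 0 ≤ R) (hs : 0 ≤ s) (hsv : 0 < sv)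
    (hrc : r^2 * cth = 1) (hcos : u*cp + v*sv ≤ cth) :
    R*r*s*(r*v) + 1/2 ≤ -(R*r*s*cp/sv)*(r*u) + (R*s/sv + 1/2) := by
  rw [← sub_nonneg]
  have hsv' : sv ≠ 0 := ne_of_gt hsv
  have hexp : -(R*r*s*cp/sv)*(r*u) + (R*s/sv + 1/2) - (R*r*s*(r*v) + 1/2)
      = (R*s - R*s*r^2*(u*cp + v*sv))/sv := by
    field_simp
    ring
  rw [hexp]
  apply div_nonneg _ hsv.le
  have h1 : R*s*r^2*(u*cp+v*sv) ≤ R*s*r^2*cth := by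
    exact mul_le_mul_of_nonneg_left hcos (mul_nonneg (mul_nonneg hR hs) (sq_nonneg r))
  have h2 : R*s*r^2*cth = R*s := by linear_combination (R*s) * hrc
  linarith


set_option maxHeartbeats 2000000 in
/-- the CHSH value of any assemblage pair whose common barycenter has
first coordinate `x ∈ [r_n cos((2M+2)θ_n), r_n cos(2Mθ_n)]` satisfies
`|C| ≤ 4(β_n^e(k;M)·x + β̂_n^e(k;M)) − 2`. -/
theorem CHSH_assemblage_bound (n : ℕ) (hodd : Odd n) (hn : 3 < n)
    (k : ℕ) (hke : Even k) (hk : k ≤ (n - 1) / 2) (M : ℕ) (hM : M ≤ (n - 3) / 2)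
    (p : Fin 2 → Fin 2 → ℝ) (w : Fin 2 → Fin 2 → Fin 3 → ℝ)
    (hp : ∀ s a, 0 ≤ p s a) (hps : ∀ s, ∑ a, p s a = 1)
    (hw : ∀ s a, w s a ∈ OmegaN n)
    (hbar : (∑ a, p 0 a • w 0 a) = (∑ a, p 1 a • w 1 a))
    (hx : (∑ a, p 0 a • w 0 a) 0 ∈
      Set.Icc (rN n * Real.cos ((2 * (M : ℝ) + 2) * thetaN n))
              (rN n * Real.cos (2 * (M : ℝ) * thetaN n))) :
    |4 * ((∑ s, ∑ a, p s a * dot3 (QQrot n k s a) (w s a)) - 1)|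
      ≤ 4 * (betaE n k M * ((∑ a, p 0 a • w 0 a) 0) + betaHatE n k M) - 2 := by
  clear hx hke
  have hn0 : 0 < n := by omega
  have hnR : (0:ℝ) < n := by exact_mod_cast hn0
  have hn4R : (4:ℝ) ≤ n := by exact_mod_cast (by omega : 4 ≤ n)
  have hθdef : thetaN n = Real.pi / n := rfl
  have hθpos : 0 < thetaN n := by rw [hθdef]; exact div_pos Real.pi_pos hnR
  have hθle : thetaN n ≤ Real.pi / 4 := by
    rw [hθdef]
    exact div_le_div_of_nonneg_left Real.pi_pos.le (by norm_num) hn4R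
  have hθlt2 : thetaN n < Real.pi / 2 := by nlinarith [Real.pi_pos]
  have hnθ : (n:ℝ) * thetaN n = Real.pi := by rw [hθdef]; field_simp
  have hcθ : 0 < Real.cos (thetaN n) :=
    Real.cos_pos_of_mem_Ioo ⟨by linarith [Real.pi_pos], hθlt2⟩
  have hr2 : rN n ^ 2 = (Real.cos (thetaN n))⁻¹ := Real.sq_sqrt (by positivity)
  have hrpos : 0 < rN n := Real.sqrt_pos.mpr (by positivity)
  have hrc : rN n ^ 2 * Real.cos (thetaN n) = 1 := by
    rw [hr2]; field_simp
  have hr1 : 1 ≤ rN n ^ 2 := by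
    nlinarith [mul_nonneg (sq_nonneg (rN n)) (sub_nonneg.mpr (Real.cos_le_one (thetaN n)))]
  have hRdef : RN n = 1/(1 + rN n^2) := rfl
  obtain ⟨t, ht⟩ := hodd
  have h2k : 2*k + 1 ≤ n := by omega
  have h2M : 2*M + 3 ≤ n := by omega
  have hkR : (k:ℝ) * thetaN n ≤ Real.pi/2 - thetaN n/2 := by
    have h1 : ((2*k+1 : ℕ):ℝ) ≤ (n:ℝ) := by exact_mod_cast h2k
    push_cast at h1
    have h2 := mul_le_mul_of_nonneg_right h1 hθpos.le
    linarith [hnθ ▸ h2]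
  have hknn : 0 ≤ (k:ℝ) * thetaN n := by positivity
  have hc0 : 0 ≤ Real.cos ((k:ℝ)*thetaN n) :=
    Real.cos_nonneg_of_mem_Icc ⟨by linarith [Real.pi_pos], by linarith⟩
  have hs0 : 0 ≤ Real.sin ((k:ℝ)*thetaN n) :=
    Real.sin_nonneg_of_nonneg_of_le_pi hknn (by linarith [Real.pi_pos])
  have hchalf : Real.sin (thetaN n/2) ≤ Real.cos ((k:ℝ)*thetaN n) := by
    have h := Real.cos_le_cos_of_nonneg_of_le_pi hknn
      (by linarith [Real.pi_pos] : Real.pi/2 - thetaN n/2 ≤ Real.pi) hkR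
    rwa [Real.cos_pi_div_two_sub] at h
  have hsinsq : 2 * Real.sin (thetaN n/2)^2 = 1 - Real.cos (thetaN n) := by
    have h := Real.cos_two_mul' (thetaN n / 2)
    have h2 := Real.sin_sq_add_cos_sq (thetaN n / 2)
    have e : (2:ℝ) * (thetaN n / 2) = thetaN n := by ring
    rw [e] at h; linarith
  have hc1 : rN n^2 - 1 ≤ 2 * rN n^2 * Real.cos ((k:ℝ)*thetaN n) := by
    have hs1 : Real.sin (thetaN n/2) ≤ 1 := Real.sin_le_one _
    have hs2 : 0 ≤ Real.sin (thetaN n/2) :=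
      Real.sin_nonneg_of_nonneg_of_le_pi (by linarith) (by linarith [Real.pi_pos])
    have e2 : Real.sin (thetaN n/2)^2 ≤ Real.sin (thetaN n/2) := by nlinarith
    have e3 : rN n^2 * Real.sin (thetaN n/2)^2 ≤ rN n^2 * Real.cos ((k:ℝ)*thetaN n) :=
      mul_le_mul_of_nonneg_left (le_trans e2 hchalf) (sq_nonneg _)
    have e4 : rN n^2 * (2 * Real.sin (thetaN n/2)^2) = rN n^2 * (1 - Real.cos (thetaN n)) := by
      rw [hsinsq]
    nlinarith [e3, e4, hrc]
  have hψpos : 0 < (2*(M:ℝ)+1) * thetaN n := by positivity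
  have hψlt : (2*(M:ℝ)+1) * thetaN n < Real.pi := by
    have h1 : ((2*M+1 : ℕ):ℝ) ≤ (n:ℝ) - 2 := by
      have : (2*M+1 : ℕ) + 2 ≤ n := by omega
      have := (Nat.cast_le (α := ℝ)).mpr this
      push_cast at this ⊢; linarith
    push_cast at h1
    nlinarith [hθpos, hnθ]
  have hsψ : 0 < Real.sin ((2*(M:ℝ)+1)*thetaN n) :=
    Real.sin_pos_of_pos_of_lt_pi hψpos hψlt
  -- vertex angle facts
  have hu2 : ∀ i : ℕ, -(rN n^2)⁻¹ ≤ Real.cos (2*(i:ℝ)*thetaN n) := by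
    intro i
    have hodd' : Odd (2*(i:ℤ) + n) := ⟨(i:ℤ) + t, by push_cast [ht]; ring⟩
    have h := cos_odd_mul_le n hn0 (2*(i:ℤ) + n) hodd'
    have hang : ((2*(i:ℤ) + (n:ℤ) : ℤ):ℝ) * (Real.pi/(n:ℝ))
        = 2*(i:ℝ)*thetaN n + Real.pi := by
      rw [← hθdef]; push_cast
      have : (n:ℝ) * thetaN n = Real.pi := hnθ
      nlinarith [this]
    rw [hang, Real.cos_add_pi, ← hθdef] at h
    have hcθinv : Real.cos (thetaN n) = (rN n^2)⁻¹ := by rw [hr2, inv_inv]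
    rw [hcθinv] at h; linarith
  have hcos1 : ∀ i : ℕ,
      Real.cos (2*(i:ℝ)*thetaN n) * Real.cos ((2*(M:ℝ)+1)*thetaN n)
        + Real.sin (2*(i:ℝ)*thetaN n) * Real.sin ((2*(M:ℝ)+1)*thetaN n)
      ≤ Real.cos (thetaN n) := by
    intro i
    have hodd' : Odd (2*(i:ℤ) - (2*(M:ℤ)+1)) := ⟨(i:ℤ) - (M:ℤ) - 1, by ring⟩
    have h := cos_odd_mul_le n hn0 _ hodd'
    have hang : ((2*(i:ℤ) - (2*(M:ℤ)+1) : ℤ):ℝ) * (Real.pi/(n:ℝ))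
        = 2*(i:ℝ)*thetaN n - (2*(M:ℝ)+1)*thetaN n := by
      rw [← hθdef]; push_cast; ring
    rw [hang, Real.cos_sub, ← hθdef] at h
    exact h
  have hcos2 : ∀ i : ℕ,
      Real.cos (2*(i:ℝ)*thetaN n) * Real.cos ((2*(M:ℝ)+1)*thetaN n)
        - Real.sin (2*(i:ℝ)*thetaN n) * Real.sin ((2*(M:ℝ)+1)*thetaN n)
      ≤ Real.cos (thetaN n) := by
    intro i
    have hodd' : Odd (2*(i:ℤ) + (2*(M:ℤ)+1)) := ⟨(i:ℤ) + (M:ℤ), by ring⟩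
    have h := cos_odd_mul_le n hn0 _ hodd'
    have hang : ((2*(i:ℤ) + (2*(M:ℤ)+1) : ℤ):ℝ) * (Real.pi/(n:ℝ))
        = 2*(i:ℝ)*thetaN n + (2*(M:ℝ)+1)*thetaN n := by
      rw [← hθdef]; push_cast; ring
    rw [hang, Real.cos_add, ← hθdef] at h
    exact h
  -- hull bounds
  have hull00 : ∀ ω ∈ OmegaN n, dot3 (QQrot n k 0 0) ω ≤ dot3 ![auxA0 n k, 0, auxC0 n k] ω := by
    apply hull_le_dot
    intro i _
    have h2 := key00 (rN n) (Real.cos ((k:ℝ)*thetaN n)) (Real.cos (2*(i:ℝ)*thetaN n))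
      hr1 hc0 (Real.cos_le_one _) hrpos
    simp only [dot3, QQrot, omegaN, auxA0, auxC0, Fin.sum_univ_three,
      Matrix.cons_val_zero, Matrix.cons_val_one, Matrix.head_cons, Matrix.cons_val_two,
      Matrix.tail_cons]
    rw [hRdef]
    linarith [h2]
  have hull01 : ∀ ω ∈ OmegaN n, dot3 (QQrot n k 0 1) ω ≤ dot3 ![auxA0 n k, 0, auxC0 n k] ω := by
    apply hull_le_dot
    intro i _
    have h2 := key01 (rN n) (Real.cos ((k:ℝ)*thetaN n)) (Real.cos (2*(i:ℝ)*thetaN n))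
      hc1 (hu2 i) hrpos
    simp only [dot3, QQrot, omegaN, auxA0, auxC0, Fin.sum_univ_three,
      Matrix.cons_val_zero, Matrix.cons_val_one, Matrix.head_cons, Matrix.cons_val_two,
      Matrix.tail_cons]
    rw [hRdef]
    linarith [h2]
  have hull10 : ∀ ω ∈ OmegaN n, dot3 (QQrot n k 1 0) ω ≤ dot3 ![auxA1 n k M, 0, auxC1 n k M] ω := by
    apply hull_le_dot
    intro i _
    have h2 := key1 (RN n) (rN n) (Real.sin ((k:ℝ)*thetaN n))
      (Real.cos ((2*(M:ℝ)+1)*thetaN n)) (Real.sin ((2*(M:ℝ)+1)*thetaN n))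
      (Real.cos (thetaN n)) (Real.cos (2*(i:ℝ)*thetaN n)) (Real.sin (2*(i:ℝ)*thetaN n))
      (by rw [hRdef]; positivity) hs0 hsψ hrc (hcos1 i)
    simp only [dot3, QQrot, omegaN, auxA1, auxC1, Fin.sum_univ_three,
      Matrix.cons_val_zero, Matrix.cons_val_one, Matrix.head_cons, Matrix.cons_val_two,
      Matrix.tail_cons]
    linarith [h2]
  have hull11 : ∀ ω ∈ OmegaN n, dot3 (QQrot n k 1 1) ω ≤ dot3 ![auxA1 n k M, 0, auxC1 n k M] ω := by
    apply hull_le_dot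
    intro i _
    have h2 := key1 (RN n) (rN n) (Real.sin ((k:ℝ)*thetaN n))
      (Real.cos ((2*(M:ℝ)+1)*thetaN n)) (Real.sin ((2*(M:ℝ)+1)*thetaN n))
      (Real.cos (thetaN n)) (Real.cos (2*(i:ℝ)*thetaN n)) (-(Real.sin (2*(i:ℝ)*thetaN n)))
      (by rw [hRdef]; positivity) hs0 hsψ hrc (by linarith [hcos2 i])
    simp only [dot3, QQrot, omegaN, auxA1, auxC1, Fin.sum_univ_three,
      Matrix.cons_val_zero, Matrix.cons_val_one, Matrix.head_cons, Matrix.cons_val_two,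
      Matrix.tail_cons]
    linarith [h2]
  -- expansion of the certificate functional
  have hdotAC : ∀ (A C : ℝ) (v : Fin 3 → ℝ), dot3 ![A, 0, C] v = A * v 0 + C * v 2 := by
    intro A C v
    simp [dot3, Fin.sum_univ_three]
  -- partner-effect identities
  have hpair0 : ∀ v : Fin 3 → ℝ,
      dot3 (QQrot n k 0 0) v + dot3 (QQrot n k 0 1) v = v 2 := by
    intro v
    simp only [dot3, QQrot, Fin.sum_univ_three, Matrix.cons_val_zero, Matrix.cons_val_one,
      Matrix.head_cons, Matrix.cons_val_two, Matrix.tail_cons]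
    ring
  have hpair1 : ∀ v : Fin 3 → ℝ,
      dot3 (QQrot n k 1 0) v + dot3 (QQrot n k 1 1) v = v 2 := by
    intro v
    simp only [dot3, QQrot, Fin.sum_univ_three, Matrix.cons_val_zero, Matrix.cons_val_one,
      Matrix.head_cons, Matrix.cons_val_two, Matrix.tail_cons]
    ring
  have hz : ∀ s a, w s a 2 = 1 := fun s a => hull_z (w s a) (hw s a)
  -- upper bounds at the four points
  have U : ∀ a b : Fin 2, dot3 (QQrot n k 0 a) (w 0 b) ≤ auxA0 n k * (w 0 b 0) + auxC0 n k := by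
    intro a b
    fin_cases a
    · have h := hull00 (w 0 b) (hw 0 b)
      rw [hdotAC, hz 0 b, mul_one] at h; exact h
    · have h := hull01 (w 0 b) (hw 0 b)
      rw [hdotAC, hz 0 b, mul_one] at h; exact h
  have U1 : ∀ a b : Fin 2, dot3 (QQrot n k 1 a) (w 1 b) ≤ auxA1 n k M * (w 1 b 0) + auxC1 n k M := by
    intro a b
    fin_cases a
    · have h := hull10 (w 1 b) (hw 1 b)
      rw [hdotAC, hz 1 b, mul_one] at h; exact h
    · have h := hull11 (w 1 b) (hw 1 b)
      rw [hdotAC, hz 1 b, mul_one] at h; exact h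
  -- lower bounds at the four points
  have L00 : 1 - (auxA0 n k * (w 0 0 0) + auxC0 n k) ≤ dot3 (QQrot n k 0 0) (w 0 0) := by
    have hp' := hpair0 (w 0 0); rw [hz 0 0] at hp'; linarith [U 1 0]
  have L01 : 1 - (auxA0 n k * (w 0 1 0) + auxC0 n k) ≤ dot3 (QQrot n k 0 1) (w 0 1) := by
    have hp' := hpair0 (w 0 1); rw [hz 0 1] at hp'; linarith [U 0 1]
  have L10 : 1 - (auxA1 n k M * (w 1 0 0) + auxC1 n k M) ≤ dot3 (QQrot n k 1 0) (w 1 0) := by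
    have hp' := hpair1 (w 1 0); rw [hz 1 0] at hp'; linarith [U1 1 0]
  have L11 : 1 - (auxA1 n k M * (w 1 1 0) + auxC1 n k M) ≤ dot3 (QQrot n k 1 1) (w 1 1) := by
    have hp' := hpair1 (w 1 1); rw [hz 1 1] at hp'; linarith [U1 0 1]
  -- barycenter coordinates
  have hX0 : (∑ a, p 0 a • w 0 a) 0 = p 0 0 * w 0 0 0 + p 0 1 * w 0 1 0 := by
    simp [Fin.sum_univ_two]
  have hX1 : p 1 0 * w 1 0 0 + p 1 1 * w 1 1 0 = p 0 0 * w 0 0 0 + p 0 1 * w 0 1 0 := by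
    have h := congrArg (fun f : Fin 3 → ℝ => f 0) hbar
    simp only [Fin.sum_univ_two, Pi.add_apply, Pi.smul_apply, smul_eq_mul] at h
    linarith [h]
  have hp00 : p 0 0 + p 0 1 = 1 := by
    have := hps 0; simpa [Fin.sum_univ_two] using this
  have hp10 : p 1 0 + p 1 1 = 1 := by
    have := hps 1; simpa [Fin.sum_univ_two] using this
  -- row bounds
  have hrow0U : p 0 0 * dot3 (QQrot n k 0 0) (w 0 0) + p 0 1 * dot3 (QQrot n k 0 1) (w 0 1)
      ≤ auxA0 n k * (p 0 0 * w 0 0 0 + p 0 1 * w 0 1 0) + auxC0 n k := by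
    have m0 := mul_le_mul_of_nonneg_left (U 0 0) (hp 0 0)
    have m1 := mul_le_mul_of_nonneg_left (U 1 1) (hp 0 1)
    have eC : auxC0 n k * (p 0 0 + p 0 1) = auxC0 n k := by rw [hp00, mul_one]
    linarith [m0, m1, eC]
  have hrow1U : p 1 0 * dot3 (QQrot n k 1 0) (w 1 0) + p 1 1 * dot3 (QQrot n k 1 1) (w 1 1)
      ≤ auxA1 n k M * (p 0 0 * w 0 0 0 + p 0 1 * w 0 1 0) + auxC1 n k M := by
    have m0 := mul_le_mul_of_nonneg_left (U1 0 0) (hp 1 0)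
    have m1 := mul_le_mul_of_nonneg_left (U1 1 1) (hp 1 1)
    have eA : auxA1 n k M * (p 1 0 * w 1 0 0 + p 1 1 * w 1 1 0)
        = auxA1 n k M * (p 0 0 * w 0 0 0 + p 0 1 * w 0 1 0) := by rw [hX1]
    have eC : auxC1 n k M * (p 1 0 + p 1 1) = auxC1 n k M := by rw [hp10, mul_one]
    linarith [m0, m1, eA, eC]
  have hrow0L : 1 - (auxA0 n k * (p 0 0 * w 0 0 0 + p 0 1 * w 0 1 0) + auxC0 n k)
      ≤ p 0 0 * dot3 (QQrot n k 0 0) (w 0 0) + p 0 1 * dot3 (QQrot n k 0 1) (w 0 1) := by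
    have m0 := mul_le_mul_of_nonneg_left L00 (hp 0 0)
    have m1 := mul_le_mul_of_nonneg_left L01 (hp 0 1)
    have eC : auxC0 n k * (p 0 0 + p 0 1) = auxC0 n k := by rw [hp00, mul_one]
    linarith [m0, m1, eC, hp00]
  have hrow1L : 1 - (auxA1 n k M * (p 0 0 * w 0 0 0 + p 0 1 * w 0 1 0) + auxC1 n k M)
      ≤ p 1 0 * dot3 (QQrot n k 1 0) (w 1 0) + p 1 1 * dot3 (QQrot n k 1 1) (w 1 1) := by
    have m0 := mul_le_mul_of_nonneg_left L10 (hp 1 0)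
    have m1 := mul_le_mul_of_nonneg_left L11 (hp 1 1)
    have eA : auxA1 n k M * (p 1 0 * w 1 0 0 + p 1 1 * w 1 1 0)
        = auxA1 n k M * (p 0 0 * w 0 0 0 + p 0 1 * w 0 1 0) := by rw [hX1]
    have eC : auxC1 n k M * (p 1 0 + p 1 1) = auxC1 n k M := by rw [hp10, mul_one]
    linarith [m0, m1, eA, eC, hp10]
  have hid := aux_id n k M (p 0 0 * w 0 0 0 + p 0 1 * w 0 1 0)
  rw [abs_le]
  simp only [Fin.sum_univ_two, hX0]
  constructor
  · linarith [hrow0L, hrow1L, hid]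
  · linarith [hrow0U, hrow1U, hid]
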